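/- Let F be a finite field, n ≥ 3, and let R, C ⊆ F^n be subspaces of dimension at most n − 3. Let G be the simple graph whose vertex set is V = {M ∈ F^{n×n} : rank(M) = 1, rowspan(M) ∩ R = {0}, colspan(M) ∩ C = {0}}, with M adjacent to M' if and only if M ≠ M', rank(M + M') = 2, rowspan(M + M') ∩ R = {0}, and colspan(M + M') ∩ C = {0}. Then G is connected and non-bipartite (it contains a closed walk of odd length; equivalently, it is not 2-colorable). -/

import Mathlib

/-- The row space of a square matrix: the span of its rows. -/
def rowSpace {F : Type*} [Field F] {n : ℕ} (M : Matrix (Fin n) (Fin n) F) :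
    Submodule F (Fin n → F) :=
  Submodule.span F (Set.range fun a => M a)

/-- The column space of a square matrix: the span of its columns. -/
def colSpace {F : Type*} [Field F] {n : ℕ} (M : Matrix (Fin n) (Fin n) F) :
    Submodule F (Fin n → F) :=
  Submodule.span F (Set.range fun a => fun b => M b a)

/-- The graph of Statement 15: vertices are the rank-1 matrices in `F^{n×n}` whose row
span meets `R` trivially and whose column span meets `C` trivially; `M ∼ M'` iff
`M ≠ M'`, `rank(M + M') = 2`, `rowspan(M+M') ∩ R = 0` and `colspan(M+M') ∩ C = 0`. -/
def rank1Graph (F : Type*) [Field F] (n : ℕ) (R C : Submodule F (Fin n → F)) :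
    SimpleGraph {M : Matrix (Fin n) (Fin n) F //
      M.rank = 1 ∧ rowSpace M ⊓ R = ⊥ ∧ colSpace M ⊓ C = ⊥} where
  Adj M M' := M ≠ M' ∧ (M.val + M'.val).rank = 2 ∧
    rowSpace (M.val + M'.val) ⊓ R = ⊥ ∧ colSpace (M.val + M'.val) ⊓ C = ⊥
  symm := ⟨by
    rintro M M' ⟨h1, h2, h3, h4⟩
    exact ⟨Ne.symm h1, by rwa [add_comm], by rwa [add_comm], by rwa [add_comm]⟩⟩
  loopless := ⟨fun M h => h.1 rfl⟩

open Submodule Module Matrix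

section Aux
variable {F : Type*} [Field F] {n : ℕ}

lemma colSpace_eq (M : Matrix (Fin n) (Fin n) F) : colSpace M = rowSpace Mᵀ := rfl

lemma rank_eq_colSpace (M : Matrix (Fin n) (Fin n) F) :
    M.rank = Module.finrank F (colSpace M) := M.rank_eq_finrank_span_cols

lemma vecMulVec_transpose (x y : Fin n → F) : (vecMulVec x y)ᵀ = vecMulVec y x := by
  ext i j; simp [vecMulVec_apply, mul_comm]

lemma vecMulVec_row (x y : Fin n → F) (i : Fin n) : (vecMulVec x y) i = x i • y := by
  funext j; simp [vecMulVec_apply]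

lemma row_mem_rowSpace (M : Matrix (Fin n) (Fin n) F) (i : Fin n) : M i ∈ rowSpace M :=
  subset_span ⟨i, rfl⟩

lemma rowSpace_vecMulVec {x : Fin n → F} (y : Fin n → F) (hx : x ≠ 0) :
    rowSpace (vecMulVec x y) = span F {y} := by
  apply le_antisymm
  · rw [rowSpace, span_le]
    rintro _ ⟨i, rfl⟩
    show (vecMulVec x y) i ∈ _
    rw [vecMulVec_row]
    exact smul_mem _ _ (mem_span_singleton_self y)
  · rw [span_le, Set.singleton_subset_iff]
    obtain ⟨i, hi⟩ := Function.ne_iff.mp hx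
    have h1 : (x i)⁻¹ • ((vecMulVec x y) i) ∈ rowSpace (vecMulVec x y) :=
      smul_mem _ _ (row_mem_rowSpace _ i)
    have h2 : (x i)⁻¹ • ((vecMulVec x y) i) = y := by
      rw [vecMulVec_row, smul_smul, inv_mul_cancel₀ (by simpa using hi), one_smul]
    rwa [h2] at h1

lemma mem_rowSpace_add {x₁ x₂ : Fin n → F} (y₁ y₂ : Fin n → F)
    (h : x₁ ∉ span F {x₂}) :
    y₁ ∈ rowSpace (vecMulVec x₁ y₁ + vecMulVec x₂ y₂) := by
  obtain ⟨f, hf1, hf2⟩ := Submodule.exists_dual_map_eq_bot_of_notMem h inferInstance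
  have hfx₂ : f x₂ = 0 := by
    have : f x₂ ∈ (span F {x₂}).map f := ⟨x₂, mem_span_singleton_self x₂, rfl⟩
    rw [hf2] at this; simpa using this
  set g : Module.Dual F (Fin n → F) := (f x₁)⁻¹ • f with hg
  have hgx₁ : g x₁ = 1 := by simp [hg, inv_mul_cancel₀ hf1]
  have hgx₂ : g x₂ = 0 := by simp [hg, hfx₂]
  set M : Matrix (Fin n) (Fin n) F := vecMulVec x₁ y₁ + vecMulVec x₂ y₂ with hM
  have hrow : ∀ i, M i = x₁ i • y₁ + x₂ i • y₂ := by
    intro i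
    funext j
    simp [hM, vecMulVec_apply, Matrix.add_apply]
  have expand : ∀ (x : Fin n → F), ∑ i, g ((Pi.single i 1 : Fin n → F)) * x i = g x := by
    intro x
    have hx : x = ∑ i, x i • ((Pi.single i 1 : Fin n → F)) := by
      simp_rw [← Pi.single_smul, smul_eq_mul, mul_one]
      exact (Finset.univ_sum_single x).symm
    conv_rhs => rw [hx]
    rw [map_sum]
    simp [_root_.map_smul, mul_comm]
  have key : y₁ = ∑ i, g ((Pi.single i 1 : Fin n → F)) • (M i) := by
    have step : ∑ i, g ((Pi.single i 1 : Fin n → F)) • (M i)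
        = (∑ i, g ((Pi.single i 1 : Fin n → F)) * x₁ i) • y₁ + (∑ i, g ((Pi.single i 1 : Fin n → F)) * x₂ i) • y₂ := by
      rw [Finset.sum_smul, Finset.sum_smul, ← Finset.sum_add_distrib]
      congr 1; funext i
      rw [hrow i, smul_add, smul_smul, smul_smul]
    rw [step, expand, expand, hgx₁, hgx₂, one_smul, zero_smul, add_zero]
  rw [key]
  exact Submodule.sum_mem _ fun i _ => smul_mem _ _ (row_mem_rowSpace M i)

lemma not_mem_span_singleton_of_pair {x₁ x₂ : Fin n → F}
    (h : LinearIndependent F ![x₁, x₂]) : x₁ ∉ span F {x₂} := by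
  intro hx
  obtain ⟨c, hc⟩ := mem_span_singleton.mp hx
  have := (LinearIndependent.pair_iff.mp h) 1 (-c) (by rw [← hc]; module)
  simpa using this.1

lemma pair_symm {x₁ x₂ : Fin n → F} (h : LinearIndependent F ![x₁, x₂]) :
    LinearIndependent F ![x₂, x₁] := by
  rw [LinearIndependent.pair_iff] at h ⊢
  intro s t hst
  exact (h t s (by rw [← hst]; module)).symm

lemma rowSpace_add (x₁ x₂ y₁ y₂ : Fin n → F)
    (h : LinearIndependent F ![x₁, x₂]) :
    rowSpace (vecMulVec x₁ y₁ + vecMulVec x₂ y₂) = span F {y₁, y₂} := by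
  apply le_antisymm
  · rw [rowSpace, span_le]
    rintro _ ⟨i, rfl⟩
    show (vecMulVec x₁ y₁ + vecMulVec x₂ y₂) i ∈ _
    have : (vecMulVec x₁ y₁ + vecMulVec x₂ y₂) i = x₁ i • y₁ + x₂ i • y₂ := by
      funext j; simp [vecMulVec_apply, Matrix.add_apply]
    rw [this]
    exact add_mem (smul_mem _ _ (subset_span (by simp)))
      (smul_mem _ _ (subset_span (by simp)))
  · rw [span_le, Set.insert_subset_iff, Set.singleton_subset_iff]
    constructor
    · exact mem_rowSpace_add y₁ y₂ (not_mem_span_singleton_of_pair h)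
    · rw [add_comm (vecMulVec x₁ y₁)]
      exact mem_rowSpace_add y₂ y₁ (not_mem_span_singleton_of_pair (pair_symm h))

lemma colSpace_add (x₁ x₂ y₁ y₂ : Fin n → F)
    (h : LinearIndependent F ![y₁, y₂]) :
    colSpace (vecMulVec x₁ y₁ + vecMulVec x₂ y₂) = span F {x₁, x₂} := by
  rw [colSpace_eq, transpose_add, vecMulVec_transpose, vecMulVec_transpose]
  exact rowSpace_add y₁ y₂ x₁ x₂ h

lemma finrank_span_pair {x₁ x₂ : Fin n → F} (h : LinearIndependent F ![x₁, x₂]) :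
    Module.finrank F (span F ({x₁, x₂} : Set (Fin n → F))) = 2 := by
  have : ({x₁, x₂} : Set (Fin n → F)) = Set.range ![x₁, x₂] := by
    simp [Set.pair_comm]
  rw [this, finrank_span_eq_card h, Fintype.card_fin]

lemma span_pair_inf_bot {W : Submodule F (Fin n → F)} {x x' : Fin n → F}
    (hx : x ∉ W) (hx' : x' ∉ W ⊔ span F {x}) :
    LinearIndependent F ![x, x'] ∧ span F ({x, x'} : Set (Fin n → F)) ⊓ W = ⊥ := by
  have hx0 : x ≠ 0 := fun h => hx (h ▸ W.zero_mem)
  have main : ∀ a b : F, a • x + b • x' ∈ W → a = 0 ∧ b = 0 := by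
    intro a b hab
    have hb : b = 0 := by
      by_contra hb
      apply hx'
      have : x' = b⁻¹ • ((a • x + b • x') - a • x) := by
        rw [add_sub_cancel_left, smul_smul, inv_mul_cancel₀ hb, one_smul]
      rw [this]
      refine smul_mem _ _ (sub_mem ?_ ?_)
      · exact mem_sup_left hab
      · exact smul_mem _ _ (mem_sup_right (mem_span_singleton_self x))
    subst hb
    rw [zero_smul, add_zero] at hab
    refine ⟨?_, rfl⟩
    by_contra ha
    exact hx (by simpa [smul_smul, inv_mul_cancel₀ ha] using W.smul_mem a⁻¹ hab)
  constructor
  · rw [LinearIndependent.pair_iff]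
    intro s t hst
    exact main s t (hst ▸ W.zero_mem)
  · rw [eq_bot_iff]
    rintro v ⟨hv1, hv2⟩
    obtain ⟨a, b, rfl⟩ := mem_span_pair.mp hv1
    obtain ⟨ha, hb⟩ := main a b hv2
    simp [ha, hb]

lemma exists_fresh (W : Submodule F (Fin n → F)) (u v : Fin n → F)
    (h : Module.finrank F W + 2 < n) :
    ∃ w : Fin n → F, w ∉ W ⊔ span F {u} ⊔ span F {v} := by
  have hspan : ∀ z : Fin n → F, Module.finrank F (span F ({z} : Set (Fin n → F))) ≤ 1 := by
    intro z
    simpa using finrank_span_le_card ({z} : Set (Fin n → F))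
  have hle : Module.finrank F ↥(W ⊔ span F {u} ⊔ span F {v}) ≤ Module.finrank F W + 2 := by
    calc Module.finrank F ↥(W ⊔ span F {u} ⊔ span F {v})
        ≤ Module.finrank F ↥(W ⊔ span F {u}) + Module.finrank F (span F ({v} : Set (Fin n → F))) :=
          Submodule.finrank_add_le_finrank_add_finrank _ _
      _ ≤ (Module.finrank F W + Module.finrank F (span F ({u} : Set (Fin n → F)))) + 1 :=
          add_le_add (Submodule.finrank_add_le_finrank_add_finrank _ _) (hspan v)
      _ ≤ Module.finrank F W + 2 := by have := hspan u; omega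
  have htop : Module.finrank F (Fin n → F) = n := by
    simp [Module.finrank_pi]
  have hlt : W ⊔ span F {u} ⊔ span F {v} < ⊤ :=
    Submodule.lt_top_of_finrank_lt_finrank (by omega : _ < Module.finrank F (Fin n → F))
  obtain ⟨w, -, hw⟩ := (SetLike.lt_iff_le_and_exists.mp hlt).2
  exact ⟨w, hw⟩

lemma colSpace_vecMulVec {y : Fin n → F} (x : Fin n → F) (hy : y ≠ 0) :
    colSpace (vecMulVec x y) = span F {x} := by
  rw [colSpace_eq, vecMulVec_transpose]
  exact rowSpace_vecMulVec x hy

lemma mk_vertex {R C : Submodule F (Fin n → F)} {x y : Fin n → F}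
    (hx : x ∉ C) (hy : y ∉ R) :
    (vecMulVec x y).rank = 1 ∧ rowSpace (vecMulVec x y) ⊓ R = ⊥ ∧
      colSpace (vecMulVec x y) ⊓ C = ⊥ := by
  have hx0 : x ≠ 0 := fun h => hx (h ▸ C.zero_mem)
  have hy0 : y ≠ 0 := fun h => hy (h ▸ R.zero_mem)
  have hrow := rowSpace_vecMulVec (x := x) y hx0
  have hcol := colSpace_vecMulVec (y := y) x hy0
  refine ⟨?_, ?_, ?_⟩
  · rw [rank_eq_colSpace, hcol, finrank_span_singleton hx0]
  · rw [hrow, eq_bot_iff]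
    rintro v ⟨hv1, hv2⟩
    obtain ⟨a, rfl⟩ := mem_span_singleton.mp hv1
    rcases eq_or_ne a 0 with rfl | ha
    · simp
    · exact absurd (by simpa [smul_smul, inv_mul_cancel₀ ha] using R.smul_mem a⁻¹ hv2) hy
  · rw [hcol, eq_bot_iff]
    rintro v ⟨hv1, hv2⟩
    obtain ⟨a, rfl⟩ := mem_span_singleton.mp hv1
    rcases eq_or_ne a 0 with rfl | ha
    · simp
    · exact absurd (by simpa [smul_smul, inv_mul_cancel₀ ha] using C.smul_mem a⁻¹ hv2) hx

lemma vertex_decomp {R C : Submodule F (Fin n → F)} (M : Matrix (Fin n) (Fin n) F)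
    (h : M.rank = 1 ∧ rowSpace M ⊓ R = ⊥ ∧ colSpace M ⊓ C = ⊥) :
    ∃ x y : Fin n → F, x ∉ C ∧ y ∉ R ∧ M = vecMulVec x y := by
  obtain ⟨h1, h2, h3⟩ := h
  have hM0 : M ≠ 0 := by
    rintro rfl
    rw [Matrix.rank_zero] at h1
    omega
  -- find a nonzero column
  have hcolex : ∃ j, (fun i => M i j) ≠ 0 := by
    by_contra hc
    push_neg at hc
    exact hM0 (by ext i j; exact congrFun (hc j) i)
  obtain ⟨j₀, hj₀⟩ := hcolex
  set x : Fin n → F := fun i => M i j₀ with hxdef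
  have hxmem : x ∈ colSpace M := subset_span ⟨j₀, rfl⟩
  have hcole : colSpace M = span F {x} := by
    refine (Submodule.eq_of_le_of_finrank_le ((span_le).mpr ?_) ?_).symm
    · simpa using hxmem
    · rw [← rank_eq_colSpace, h1, finrank_span_singleton hj₀]
  have hcolmem : ∀ j, ∃ c : F, (fun i => M i j) = c • x := by
    intro j
    have : (fun i => M i j) ∈ span F ({x} : Set (Fin n → F)) :=
      hcole ▸ (subset_span ⟨j, rfl⟩ : _ ∈ colSpace M)
    obtain ⟨c, hc⟩ := mem_span_singleton.mp this
    exact ⟨c, hc.symm⟩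
  choose y hy using hcolmem
  have hMeq : M = vecMulVec x y := by
    ext i j
    have := congrFun (hy j) i
    simp only [Pi.smul_apply, smul_eq_mul] at this
    rw [vecMulVec_apply, this, mul_comm]
  have hy0 : y ≠ 0 := by
    rintro rfl
    apply hM0
    rw [hMeq]
    ext i j
    simp [vecMulVec_apply]
  have hxC : x ∉ C := by
    intro hxc
    have : x ∈ colSpace M ⊓ C := ⟨hxmem, hxc⟩
    rw [h3] at this
    exact hj₀ (by simpa using this)
  have hrowe : rowSpace M = span F {y} := by
    rw [hMeq]; exact rowSpace_vecMulVec y hj₀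
  have hyR : y ∉ R := by
    intro hyr
    have hymem : y ∈ rowSpace M := hrowe ▸ mem_span_singleton_self y
    have : y ∈ rowSpace M ⊓ R := ⟨hymem, hyr⟩
    rw [h2] at this
    exact hy0 (by simpa using this)
  exact ⟨x, y, hxC, hyR, hMeq⟩

lemma pair_fst_ne_zero {x x' : Fin n → F} (h : LinearIndependent F ![x, x']) : x ≠ 0 := by
  have := h.ne_zero 0
  simpa using this

lemma adj_of {R C : Submodule F (Fin n → F)}
    (A B : {M : Matrix (Fin n) (Fin n) F //
      M.rank = 1 ∧ rowSpace M ⊓ R = ⊥ ∧ colSpace M ⊓ C = ⊥})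
    (x y x' y' : Fin n → F) (hA : A.val = vecMulVec x y) (hB : B.val = vecMulVec x' y')
    (hxi : LinearIndependent F ![x, x']) (hyi : LinearIndependent F ![y, y'])
    (hCinf : span F ({x, x'} : Set (Fin n → F)) ⊓ C = ⊥)
    (hRinf : span F ({y, y'} : Set (Fin n → F)) ⊓ R = ⊥) :
    (rank1Graph F n R C).Adj A B := by
  have hy0 : y ≠ 0 := pair_fst_ne_zero hyi
  have hy'0 : y' ≠ 0 := pair_fst_ne_zero (pair_symm hyi)
  show A ≠ B ∧ _ ∧ _ ∧ _
  refine ⟨?_, ?_, ?_, ?_⟩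
  · intro hAB
    have hval : vecMulVec x y = vecMulVec x' y' := by rw [← hA, ← hB, hAB]
    have hc : span F ({x} : Set (Fin n → F)) = span F {x'} := by
      rw [← colSpace_vecMulVec x hy0, ← colSpace_vecMulVec x' hy'0, hval]
    exact not_mem_span_singleton_of_pair hxi (hc ▸ mem_span_singleton_self x)
  · rw [hA, hB, rank_eq_colSpace, colSpace_add _ _ _ _ hyi, finrank_span_pair hxi]
  · rw [hA, hB, rowSpace_add _ _ _ _ hxi]
    exact hRinf
  · rw [hA, hB, colSpace_add _ _ _ _ hyi]
    exact hCinf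

lemma notMem_of_notMem_sup {p q : Submodule F (Fin n → F)} {w : Fin n → F}
    (h : w ∉ p ⊔ q) : w ∉ p := fun hw => h (Submodule.mem_sup_left hw)

end Aux

/-- Let `F` be a finite field, `n ≥ 3`, and `R, C ⊆ F^n` subspaces of
dimension at most `n − 3`. Then the graph `rank1Graph F n R C` is connected and
non-bipartite (not 2-colorable). -/
theorem stmt15 (F : Type*) [Field F] [Fintype F] (n : ℕ) (hn : 3 ≤ n)
    (R C : Submodule F (Fin n → F))
    (hR : Module.finrank F R ≤ n - 3) (hC : Module.finrank F C ≤ n - 3) :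
    (rank1Graph F n R C).Connected ∧ ¬ (rank1Graph F n R C).Colorable 2 := by
  have hRlt : Module.finrank F R + 2 < n := by omega
  have hClt : Module.finrank F C + 2 < n := by omega
  -- existence of a vertex
  obtain ⟨x₀, hx₀⟩ := exists_fresh C 0 0 hClt
  obtain ⟨y₀, hy₀⟩ := exists_fresh R 0 0 hRlt
  have hx₀C : x₀ ∉ C := notMem_of_notMem_sup (notMem_of_notMem_sup hx₀)
  have hy₀R : y₀ ∉ R := notMem_of_notMem_sup (notMem_of_notMem_sup hy₀)
  have hvert := mk_vertex (R := R) (C := C) hx₀C hy₀R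
  constructor
  · rw [SimpleGraph.connected_iff]
    refine ⟨?_, ⟨⟨vecMulVec x₀ y₀, hvert⟩⟩⟩
    intro A B
    obtain ⟨x, y, hxC, hyR, hA⟩ := vertex_decomp (R := R) (C := C) A.val A.prop
    obtain ⟨x', y', hx'C, hy'R, hB⟩ := vertex_decomp (R := R) (C := C) B.val B.prop
    obtain ⟨x'', hx''⟩ := exists_fresh C x x' hClt
    obtain ⟨y'', hy''⟩ := exists_fresh R y y' hRlt
    have hx''1 : x'' ∉ C ⊔ span F {x} := notMem_of_notMem_sup hx''
    have hy''1 : y'' ∉ R ⊔ span F {y} := notMem_of_notMem_sup hy''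
    have hx''2 : x'' ∉ C ⊔ span F {x'} := by
      intro hw
      refine hx'' ?_
      rcases Submodule.mem_sup.mp hw with ⟨a, ha, b, hb, rfl⟩
      exact add_mem (Submodule.mem_sup_left (Submodule.mem_sup_left ha))
        (Submodule.mem_sup_right hb)
    have hy''2 : y'' ∉ R ⊔ span F {y'} := by
      intro hw
      refine hy'' ?_
      rcases Submodule.mem_sup.mp hw with ⟨a, ha, b, hb, rfl⟩
      exact add_mem (Submodule.mem_sup_left (Submodule.mem_sup_left ha))
        (Submodule.mem_sup_right hb)
    obtain ⟨hxi1, hxs1⟩ := span_pair_inf_bot hxC hx''1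
    obtain ⟨hyi1, hys1⟩ := span_pair_inf_bot hyR hy''1
    obtain ⟨hxi2, hxs2⟩ := span_pair_inf_bot hx'C hx''2
    obtain ⟨hyi2, hys2⟩ := span_pair_inf_bot hy'R hy''2
    have hx''C : x'' ∉ C := notMem_of_notMem_sup hx''1
    have hy''R : y'' ∉ R := notMem_of_notMem_sup hy''1
    set W : {M : Matrix (Fin n) (Fin n) F //
        M.rank = 1 ∧ rowSpace M ⊓ R = ⊥ ∧ colSpace M ⊓ C = ⊥} :=
      ⟨vecMulVec x'' y'', mk_vertex hx''C hy''R⟩ with hW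
    have adj1 : (rank1Graph F n R C).Adj A W :=
      adj_of A W x y x'' y'' hA rfl hxi1 hyi1 hxs1 hys1
    have adj2 : (rank1Graph F n R C).Adj B W :=
      adj_of B W x' y' x'' y'' hB rfl hxi2 hyi2 hxs2 hys2
    exact adj1.reachable.trans adj2.reachable.symm
  · rintro ⟨c⟩
    -- build a triangle
    obtain ⟨x₂, hx₂⟩ := exists_fresh C x₀ x₀ hClt
    obtain ⟨y₂, hy₂⟩ := exists_fresh R y₀ y₀ hRlt
    have hx₂1 : x₂ ∉ C ⊔ span F {x₀} := notMem_of_notMem_sup hx₂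
    have hy₂1 : y₂ ∉ R ⊔ span F {y₀} := notMem_of_notMem_sup hy₂
    have hx₂C : x₂ ∉ C := notMem_of_notMem_sup hx₂1
    have hy₂R : y₂ ∉ R := notMem_of_notMem_sup hy₂1
    set x₃ : Fin n → F := x₀ + x₂ with hx₃def
    set y₃ : Fin n → F := y₀ + y₂ with hy₃def
    have hx₃1 : x₃ ∉ C ⊔ span F {x₀} := by
      intro h
      have h2 := sub_mem h (Submodule.mem_sup_right (mem_span_singleton_self x₀))
      exact hx₂1 (by simpa [hx₃def] using h2)
    have hy₃1 : y₃ ∉ R ⊔ span F {y₀} := by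
      intro h
      have h2 := sub_mem h (Submodule.mem_sup_right (mem_span_singleton_self y₀))
      exact hy₂1 (by simpa [hy₃def] using h2)
    have hx₃C : x₃ ∉ C := notMem_of_notMem_sup hx₃1
    have hy₃R : y₃ ∉ R := notMem_of_notMem_sup hy₃1
    obtain ⟨hxi12, hxs12⟩ := span_pair_inf_bot hx₀C hx₂1
    obtain ⟨hyi12, hys12⟩ := span_pair_inf_bot hy₀R hy₂1
    obtain ⟨hxi13, hxs13⟩ := span_pair_inf_bot hx₀C hx₃1
    obtain ⟨hyi13, hys13⟩ := span_pair_inf_bot hy₀R hy₃1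
    -- the pair (x₂, x₃)
    have hxi23 : LinearIndependent F ![x₂, x₃] := by
      rw [LinearIndependent.pair_iff]
      intro s t hst
      have h' : t • x₀ + (s + t) • x₂ = 0 := by
        have : t • x₀ + (s + t) • x₂ = s • x₂ + t • x₃ := by rw [hx₃def]; module
        rw [this, hst]
      obtain ⟨h1, h2⟩ := LinearIndependent.pair_iff.mp hxi12 t (s + t) h'
      exact ⟨by simpa [h1] using h2, h1⟩
    have hyi23 : LinearIndependent F ![y₂, y₃] := by
      rw [LinearIndependent.pair_iff]
      intro s t hst
      have h' : t • y₀ + (s + t) • y₂ = 0 := by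
        have : t • y₀ + (s + t) • y₂ = s • y₂ + t • y₃ := by rw [hy₃def]; module
        rw [this, hst]
      obtain ⟨h1, h2⟩ := LinearIndependent.pair_iff.mp hyi12 t (s + t) h'
      exact ⟨by simpa [h1] using h2, h1⟩
    have hsub23 : ∀ (u v : Fin n → F),
        span F ({v, u + v} : Set (Fin n → F)) ≤ span F ({u, v} : Set (Fin n → F)) := by
      intro u v
      rw [span_le, Set.insert_subset_iff, Set.singleton_subset_iff]
      constructor
      · exact subset_span (by simp)
      · exact add_mem (subset_span (by simp)) (subset_span (by simp))
    have hxs23 : span F ({x₂, x₃} : Set (Fin n → F)) ⊓ C = ⊥ := by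
      rw [eq_bot_iff, ← hxs12]
      exact inf_le_inf_right C (hx₃def ▸ hsub23 x₀ x₂)
    have hys23 : span F ({y₂, y₃} : Set (Fin n → F)) ⊓ R = ⊥ := by
      rw [eq_bot_iff, ← hys12]
      exact inf_le_inf_right R (hy₃def ▸ hsub23 y₀ y₂)
    set M₁ : {M : Matrix (Fin n) (Fin n) F //
        M.rank = 1 ∧ rowSpace M ⊓ R = ⊥ ∧ colSpace M ⊓ C = ⊥} :=
      ⟨vecMulVec x₀ y₀, mk_vertex hx₀C hy₀R⟩ with hM₁
    set M₂ : {M : Matrix (Fin n) (Fin n) F //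
        M.rank = 1 ∧ rowSpace M ⊓ R = ⊥ ∧ colSpace M ⊓ C = ⊥} :=
      ⟨vecMulVec x₂ y₂, mk_vertex hx₂C hy₂R⟩ with hM₂
    set M₃ : {M : Matrix (Fin n) (Fin n) F //
        M.rank = 1 ∧ rowSpace M ⊓ R = ⊥ ∧ colSpace M ⊓ C = ⊥} :=
      ⟨vecMulVec x₃ y₃, mk_vertex hx₃C hy₃R⟩ with hM₃
    have adj12 : (rank1Graph F n R C).Adj M₁ M₂ :=
      adj_of M₁ M₂ x₀ y₀ x₂ y₂ rfl rfl hxi12 hyi12 hxs12 hys12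
    have adj13 : (rank1Graph F n R C).Adj M₁ M₃ :=
      adj_of M₁ M₃ x₀ y₀ x₃ y₃ rfl rfl hxi13 hyi13 hxs13 hys13
    have adj23 : (rank1Graph F n R C).Adj M₂ M₃ :=
      adj_of M₂ M₃ x₂ y₂ x₃ y₃ rfl rfl hxi23 hyi23 hxs23 hys23
    have h12 := c.valid adj12
    have h13 := c.valid adj13
    have h23 := c.valid adj23
    have v12 : (c M₁).val ≠ (c M₂).val := fun h => h12 (Fin.ext h)
    have v13 : (c M₁).val ≠ (c M₃).val := fun h => h13 (Fin.ext h)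
    have v23 : (c M₂).val ≠ (c M₃).val := fun h => h23 (Fin.ext h)
    have b1 := (c M₁).isLt
    have b2 := (c M₂).isLt
    have b3 := (c M₃).isLt
    omega
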